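/- Let m, n ≥ 3 be integers. The Type-II hyperedge-deleted Seidel matrix S_II(m,n) has exactly one negative eigenvalue, and its remaining m+n-1 eigenvalues (counted with multiplicity) are all positive. -/

import Mathlib

open Polynomial Matrix

/-- The Seidel matrix of the complete 3-uniform bipartite hypergraph `C³_{m,n}`. -/
noncomputable def seidelS (m n : ℕ) : Matrix (Fin m ⊕ Fin n) (Fin m ⊕ Fin n) ℝ :=
  fun i j =>
    if i = j then 0
    else
      match i, j with
      | Sum.inl _, Sum.inl _ => 1 - 2 * (n : ℝ)
      | Sum.inr _, Sum.inr _ => 1 - 2 * (m : ℝ)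
      | _, _ => 1 - 2 * ((m : ℝ) + (n : ℝ) - 2)

/-- Type-I hyperedge-deleted Seidel matrix. -/
noncomputable def seidelI (m n : ℕ) : Matrix (Fin m ⊕ Fin n) (Fin m ⊕ Fin n) ℝ :=
  fun i j =>
    match i, j with
    | Sum.inl a, Sum.inr b =>
        if a.val = 0 ∧ b.val ≤ 1 then 1 - 2 * ((m : ℝ) + (n : ℝ) - 3)
        else seidelS m n (Sum.inl a) (Sum.inr b)
    | Sum.inr b, Sum.inl a =>
        if a.val = 0 ∧ b.val ≤ 1 then 1 - 2 * ((m : ℝ) + (n : ℝ) - 3)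
        else seidelS m n (Sum.inr b) (Sum.inl a)
    | Sum.inr a, Sum.inr b =>
        if (a.val = 0 ∧ b.val = 1) ∨ (a.val = 1 ∧ b.val = 0) then 1 - 2 * ((m : ℝ) - 1)
        else seidelS m n (Sum.inr a) (Sum.inr b)
    | Sum.inl a, Sum.inl b => seidelS m n (Sum.inl a) (Sum.inl b)

/-- Type-II hyperedge-deleted Seidel matrix. -/
noncomputable def seidelII (m n : ℕ) : Matrix (Fin m ⊕ Fin n) (Fin m ⊕ Fin n) ℝ :=
  fun i j =>
    match i, j with
    | Sum.inl a, Sum.inl b =>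
        if (a.val = 0 ∧ b.val = 1) ∨ (a.val = 1 ∧ b.val = 0) then 1 - 2 * ((n : ℝ) - 1)
        else seidelS m n (Sum.inl a) (Sum.inl b)
    | Sum.inl a, Sum.inr b =>
        if a.val ≤ 1 ∧ b.val = 0 then 1 - 2 * ((m : ℝ) + (n : ℝ) - 3)
        else seidelS m n (Sum.inl a) (Sum.inr b)
    | Sum.inr b, Sum.inl a =>
        if a.val ≤ 1 ∧ b.val = 0 then 1 - 2 * ((m : ℝ) + (n : ℝ) - 3)
        else seidelS m n (Sum.inr b) (Sum.inl a)
    | Sum.inr a, Sum.inr b => seidelS m n (Sum.inr a) (Sum.inr b)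


namespace SeidelAux

variable (m n : ℕ)

/-- indicator of the first block -/
noncomputable def uu : Fin m ⊕ Fin n → ℝ := Sum.elim 1 0
/-- indicator of the second block -/
noncomputable def vv : Fin m ⊕ Fin n → ℝ := Sum.elim 0 1
/-- indicator of inl 0 -/
noncomputable def d0 : Fin m ⊕ Fin n → ℝ :=
  Sum.elim (fun a => if a.val = 0 then 1 else 0) 0
/-- indicator of inl 1 -/
noncomputable def d1 : Fin m ⊕ Fin n → ℝ :=
  Sum.elim (fun a => if a.val = 1 then 1 else 0) 0
/-- indicator of inr 0 -/
noncomputable def g0 : Fin m ⊕ Fin n → ℝ :=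
  Sum.elim 0 (fun b => if b.val = 0 then 1 else 0)

lemma seidelII_decomp :
    seidelII m n =
      (2*(m:ℝ)-4) • vecMulVec (uu m n) (uu m n) + (2*(n:ℝ)-4) • vecMulVec (vv m n) (vv m n)
      + (2*(n:ℝ)-1) • Matrix.diagonal (uu m n) + (2*(m:ℝ)-1) • Matrix.diagonal (vv m n)
      + (2:ℝ) • (vecMulVec (d0 m n) (d1 m n) + vecMulVec (d1 m n) (d0 m n)
          + vecMulVec (d0 m n + d1 m n) (g0 m n) + vecMulVec (g0 m n) (d0 m n + d1 m n))
      - (2*(m:ℝ)+2*(n:ℝ)-5) • vecMulVec (fun _ => 1) (fun _ => 1) := by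
  ext i j
  rcases i with a | a <;> rcases j with b | b <;>
    simp only [seidelII, seidelS, uu, vv, d0, d1, g0, Matrix.add_apply, Matrix.sub_apply,
      Matrix.smul_apply, vecMulVec_apply, Matrix.diagonal_apply, Sum.elim_inl, Sum.elim_inr,
      Pi.add_apply, Pi.one_apply, Pi.zero_apply, smul_eq_mul, Sum.inl.injEq, Sum.inr.injEq,
      Fin.ext_iff, reduceCtorEq] <;>
    split_ifs <;>
    first
      | exact False.elim ‹False›
      | (exfalso; omega)
      | (push_cast; ring1)


lemma dot_vecMulVec {K : Type*} [Fintype K] (a b x : K → ℝ) :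
    x ⬝ᵥ (vecMulVec a b *ᵥ x) = (a ⬝ᵥ x) * (b ⬝ᵥ x) := by
  have h : vecMulVec a b *ᵥ x = (b ⬝ᵥ x) • a := by
    funext i
    rw [mulVec, dotProduct, Pi.smul_apply, smul_eq_mul, dotProduct, Finset.sum_mul]
    exact Finset.sum_congr rfl fun j _ => by simp [vecMulVec_apply]; ring
  rw [h, dotProduct_smul, smul_eq_mul, dotProduct_comm x a]
  ring

lemma dot_diagonal {K : Type*} [Fintype K] [DecidableEq K] (d x : K → ℝ) :
    x ⬝ᵥ (Matrix.diagonal d *ᵥ x) = ∑ i, d i * x i ^ 2 := by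
  simp only [dotProduct, mulVec_diagonal]
  exact Finset.sum_congr rfl fun i _ => by ring

lemma qf (x : Fin m ⊕ Fin n → ℝ) :
    x ⬝ᵥ (seidelII m n *ᵥ x) =
      (2*(m:ℝ)-4) * (uu m n ⬝ᵥ x)^2 + (2*(n:ℝ)-4) * (vv m n ⬝ᵥ x)^2
      + (2*(n:ℝ)-1) * (∑ i, uu m n i * x i ^ 2) + (2*(m:ℝ)-1) * (∑ i, vv m n i * x i ^ 2)
      + 4 * (d0 m n ⬝ᵥ x) * (d1 m n ⬝ᵥ x)
      + 4 * ((d0 m n ⬝ᵥ x) + (d1 m n ⬝ᵥ x)) * (g0 m n ⬝ᵥ x)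
      - (2*(m:ℝ)+2*(n:ℝ)-5) * (∑ i, x i)^2 := by
  have h1 : ((fun _ => (1:ℝ)) ⬝ᵥ x) = ∑ i, x i := by simp [dotProduct]
  conv_lhs => rw [seidelII_decomp m n]
  simp only [add_mulVec, sub_mulVec, smul_mulVec, dotProduct_add, dotProduct_sub,
    dotProduct_smul, smul_eq_mul, dot_vecMulVec, dot_diagonal, add_dotProduct, h1]
  ring

lemma uu_dot (x : Fin m ⊕ Fin n → ℝ) : uu m n ⬝ᵥ x = ∑ a, x (Sum.inl a) := by
  rw [dotProduct, Fintype.sum_sum_type]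
  simp [uu]

lemma vv_dot (x : Fin m ⊕ Fin n → ℝ) : vv m n ⬝ᵥ x = ∑ b, x (Sum.inr b) := by
  rw [dotProduct, Fintype.sum_sum_type]
  simp [vv]

lemma uu_sq (x : Fin m ⊕ Fin n → ℝ) :
    ∑ i, uu m n i * x i ^ 2 = ∑ a, x (Sum.inl a) ^ 2 := by
  rw [Fintype.sum_sum_type]
  simp [uu]

lemma vv_sq (x : Fin m ⊕ Fin n → ℝ) :
    ∑ i, vv m n i * x i ^ 2 = ∑ b, x (Sum.inr b) ^ 2 := by
  rw [Fintype.sum_sum_type]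
  simp [vv]

lemma d0_dot (h : 0 < m) (x : Fin m ⊕ Fin n → ℝ) :
    d0 m n ⬝ᵥ x = x (Sum.inl ⟨0, h⟩) := by
  rw [dotProduct, Fintype.sum_sum_type]
  simp only [d0, Sum.elim_inl, Sum.elim_inr, Pi.zero_apply, zero_mul, Finset.sum_const_zero,
    add_zero]
  rw [Finset.sum_eq_single (⟨0, h⟩ : Fin m)]
  · simp
  · intro b _ hb
    have hb' : ¬ b.val = 0 := by simpa [Fin.ext_iff] using hb
    simp [hb']
  · intro hmem; exact absurd (Finset.mem_univ _) hmem

lemma d1_dot (h : 1 < m) (x : Fin m ⊕ Fin n → ℝ) :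
    d1 m n ⬝ᵥ x = x (Sum.inl ⟨1, h⟩) := by
  rw [dotProduct, Fintype.sum_sum_type]
  simp only [d1, Sum.elim_inl, Sum.elim_inr, Pi.zero_apply, zero_mul, Finset.sum_const_zero,
    add_zero]
  rw [Finset.sum_eq_single (⟨1, h⟩ : Fin m)]
  · simp
  · intro b _ hb
    have hb' : ¬ b.val = 1 := by simpa [Fin.ext_iff] using hb
    simp [hb']
  · intro hmem; exact absurd (Finset.mem_univ _) hmem

lemma g0_dot (h : 0 < n) (x : Fin m ⊕ Fin n → ℝ) :
    g0 m n ⬝ᵥ x = x (Sum.inr ⟨0, h⟩) := by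
  rw [dotProduct, Fintype.sum_sum_type]
  simp only [g0, Sum.elim_inl, Sum.elim_inr, Pi.zero_apply, zero_mul, Finset.sum_const_zero,
    zero_add]
  rw [Finset.sum_eq_single (⟨0, h⟩ : Fin n)]
  · simp
  · intro b _ hb
    have hb' : ¬ b.val = 0 := by simpa [Fin.ext_iff] using hb
    simp [hb']
  · intro hmem; exact absurd (Finset.mem_univ _) hmem

lemma seidelII_herm : (seidelII m n).IsHermitian := by
  have h : ∀ (a b : Fin m ⊕ Fin n → ℝ), (vecMulVec a b)ᴴ = vecMulVec b a := by
    intro a b; ext i j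
    simp [conjTranspose_apply, vecMulVec_apply, mul_comm]
  rw [Matrix.IsHermitian, seidelII_decomp m n]
  simp only [conjTranspose_add, conjTranspose_sub, conjTranspose_smul, h,
    Matrix.diagonal_conjTranspose, star_trivial]
  module

lemma qf_lower (hm : 3 ≤ m) (hn : 3 ≤ n) (x : Fin m ⊕ Fin n → ℝ) (hx : ∑ i, x i = 0) :
    ∑ i, x i ^ 2 ≤ x ⬝ᵥ (seidelII m n *ᵥ x) := by
  have h0m : 0 < m := by omega
  have h1m : 1 < m := by omega
  have h0n : 0 < n := by omega
  rw [qf m n x, hx, d0_dot m n h0m, d1_dot m n h1m, g0_dot m n h0n, uu_sq, vv_sq]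
  set x0 := x (Sum.inl ⟨0, h0m⟩)
  set x1 := x (Sum.inl ⟨1, h1m⟩)
  set y0 := x (Sum.inr ⟨0, h0n⟩)
  have hsplit : ∑ i, x i ^ 2 = (∑ a, x (Sum.inl a) ^ 2) + (∑ b, x (Sum.inr b) ^ 2) :=
    Fintype.sum_sum_type _
  rw [hsplit]
  have h01 : (⟨0, h0m⟩ : Fin m) ≠ ⟨1, h1m⟩ := by simp [Fin.ext_iff]
  have hA1 : x0 ^ 2 + x1 ^ 2 ≤ ∑ a, x (Sum.inl a) ^ 2 := by
    have := Finset.sum_le_sum_of_subset_of_nonneg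
      (Finset.subset_univ ({⟨0, h0m⟩, ⟨1, h1m⟩} : Finset (Fin m)))
      (fun i _ _ => sq_nonneg (x (Sum.inl i)))
    rwa [Finset.sum_pair h01] at this
  have hB1 : y0 ^ 2 ≤ ∑ b, x (Sum.inr b) ^ 2 := by
    have := Finset.sum_le_sum_of_subset_of_nonneg
      (Finset.subset_univ ({⟨0, h0n⟩} : Finset (Fin n)))
      (fun i _ _ => sq_nonneg (x (Sum.inr i)))
    rwa [Finset.sum_singleton] at this
  have hA0 : (0:ℝ) ≤ ∑ a, x (Sum.inl a) ^ 2 := Finset.sum_nonneg fun _ _ => sq_nonneg _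
  have hB0 : (0:ℝ) ≤ ∑ b, x (Sum.inr b) ^ 2 := Finset.sum_nonneg fun _ _ => sq_nonneg _
  have hm' : (3:ℝ) ≤ (m:ℝ) := by exact_mod_cast hm
  have hn' : (3:ℝ) ≤ (n:ℝ) := by exact_mod_cast hn
  nlinarith [sq_nonneg (x0 + x1), sq_nonneg (x0 + y0), sq_nonneg (x1 + y0),
    mul_nonneg (show (0:ℝ) ≤ 2*(m:ℝ)-4 by linarith) (sq_nonneg (uu m n ⬝ᵥ x)),
    mul_nonneg (show (0:ℝ) ≤ 2*(n:ℝ)-4 by linarith) (sq_nonneg (vv m n ⬝ᵥ x)),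
    mul_nonneg (show (0:ℝ) ≤ 2*(n:ℝ)-6 by linarith) hA0,
    mul_nonneg (show (0:ℝ) ≤ 2*(m:ℝ)-6 by linarith) hB0]

lemma qf_one (hm : 3 ≤ m) (hn : 3 ≤ n) :
    (fun _ => (1:ℝ)) ⬝ᵥ (seidelII m n *ᵥ (fun _ => (1:ℝ))) < 0 := by
  have h0m : 0 < m := by omega
  have h1m : 1 < m := by omega
  have h0n : 0 < n := by omega
  rw [qf m n, d0_dot m n h0m, d1_dot m n h1m, g0_dot m n h0n, uu_sq, vv_sq, uu_dot, vv_dot]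
  have e1 : ∑ a : Fin m, (1:ℝ) = (m:ℝ) := by simp
  have e2 : ∑ b : Fin n, (1:ℝ) = (n:ℝ) := by simp
  have e3 : ∑ _i : Fin m ⊕ Fin n, (1:ℝ) = (m:ℝ) + (n:ℝ) := by
    rw [Fintype.sum_sum_type]
    simp
  have e4 : ∑ a : Fin m, (1:ℝ)^2 = (m:ℝ) := by simp
  have e5 : ∑ b : Fin n, (1:ℝ)^2 = (n:ℝ) := by simp
  rw [e1, e2, e3, e4, e5]
  have hm' : (3:ℝ) ≤ (m:ℝ) := by exact_mod_cast hm
  have hn' : (3:ℝ) ≤ (n:ℝ) := by exact_mod_cast hn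
  nlinarith [mul_nonneg (show (0:ℝ) ≤ (m:ℝ)-3 by linarith) (show (0:ℝ) ≤ (n:ℝ)-3 by linarith),
    mul_pos (show (0:ℝ) < (m:ℝ) by linarith) (show (0:ℝ) < (n:ℝ) by linarith),
    mul_nonneg (mul_nonneg (show (0:ℝ) ≤ (m:ℝ) by linarith) (show (0:ℝ) ≤ (m:ℝ) by linarith))
      (show (0:ℝ) ≤ (n:ℝ)-3 by linarith),
    mul_nonneg (mul_nonneg (show (0:ℝ) ≤ (n:ℝ) by linarith) (show (0:ℝ) ≤ (n:ℝ) by linarith))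
      (show (0:ℝ) ≤ (m:ℝ)-3 by linarith)]

end SeidelAux

section Spectral
variable {N : Type*} [Fintype N] [DecidableEq N]

lemma charpoly_mul_inv (U D V : Matrix N N ℝ) (hUV : U * V = 1) :
    (U * D * V).charpoly = D.charpoly := by
  have hkey : charmatrix (U * D * V) =
      (C : ℝ →+* ℝ[X]).mapMatrix U * charmatrix D * (C : ℝ →+* ℝ[X]).mapMatrix V := by
    have hsc : ∀ (B : Matrix N N ℝ[X]), B * Matrix.scalar N (X : ℝ[X]) =
        Matrix.scalar N (X : ℝ[X]) * B := fun B =>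
      ((Matrix.scalar_commute (X : ℝ[X]) (fun r => Commute.all _ _) B)).eq.symm
    simp only [charmatrix, mul_sub, sub_mul]
    congr 1
    · rw [hsc, mul_assoc, ← _root_.map_mul, hUV, _root_.map_one, mul_one]
    · rw [← _root_.map_mul, ← _root_.map_mul]
  show (charmatrix (U * D * V)).det = _
  rw [hkey, det_mul, det_mul, ← RingHom.map_det, ← RingHom.map_det]
  show _ = (charmatrix D).det
  have h1 : C U.det * C V.det = 1 := by
    rw [← _root_.map_mul, ← det_mul, hUV, det_one, Polynomial.C_1]
  calc C U.det * (charmatrix D).det * C V.det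
      = (charmatrix D).det * (C U.det * C V.det) := by ring
    _ = (charmatrix D).det := by rw [h1, mul_one]
  
lemma charpoly_hermitian (A : Matrix N N ℝ) (hA : A.IsHermitian) :
    A.charpoly = ((Finset.univ.val.map hA.eigenvalues).map (fun a => X - C a)).prod := by
  conv_lhs => rw [hA.spectral_theorem, Unitary.conjStarAlgAut_apply]
  rw [charpoly_mul_inv _ _ _ (Matrix.mem_unitaryGroup_iff.mp (hA.eigenvectorUnitary).2)]
  have h1 : (RCLike.ofReal ∘ hA.eigenvalues : N → ℝ) = hA.eigenvalues := by
    funext i; simp [RCLike.ofReal_real_eq_id]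
  rw [h1]
  have h2 : charmatrix (diagonal hA.eigenvalues) =
      diagonal (fun i => X - C (hA.eigenvalues i)) := by
    ext i j
    by_cases h : i = j
    · subst h; rw [charmatrix_apply_eq, diagonal_apply_eq, diagonal_apply_eq]
    · rw [charmatrix_apply_ne _ _ _ h, diagonal_apply_ne _ h, diagonal_apply_ne _ h, map_zero,
        neg_zero]
  show (charmatrix _).det = _
  rw [h2, det_diagonal, Finset.prod_eq_multiset_prod, Multiset.map_map]
  rfl

lemma roots_charpoly_hermitian (A : Matrix N N ℝ) (hA : A.IsHermitian) :
    A.charpoly.roots = Finset.univ.val.map hA.eigenvalues := by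
  rw [charpoly_hermitian A hA, roots_multiset_prod_X_sub_C]

end Spectral

section Count
variable {N : Type*} [Fintype N] [DecidableEq N]


lemma eig_key (ev : N → ℝ) (p : ℝ → Prop) [DecidablePred p] (i₀ : N) (hp0 : p (ev i₀))
    (himp : ∀ x, p x → x < 1) (hone : ∀ i j, ev i < 1 → ev j < 1 → i = j) :
    ((Finset.univ.val.map ev).filter p).card = 1 := by
  rw [Multiset.filter_map, Multiset.card_map]
  have : (Finset.univ.val.filter (p ∘ ev)).card = (Finset.univ.filter (fun i => p (ev i))).card :=
    rfl
  rw [this]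
  apply le_antisymm
  · apply Finset.card_le_one.mpr
    intro a ha b hb
    rw [Finset.mem_filter] at ha hb
    exact hone a b (himp _ ha.2) (himp _ hb.2)
  · apply Finset.card_pos.mpr
    exact ⟨i₀, Finset.mem_filter.mpr ⟨Finset.mem_univ _, hp0⟩⟩

end Count

section Eig
variable {N : Type*} [Fintype N] [DecidableEq N]

lemma eig_at_most_one (A : Matrix N N ℝ) (hA : A.IsHermitian)
    (hq : ∀ x : N → ℝ, (∑ i, x i) = 0 → ∑ i, (x i)^2 ≤ x ⬝ᵥ (A *ᵥ x)) :
    ∀ i j, hA.eigenvalues i < 1 → hA.eigenvalues j < 1 → i = j := by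
  intro i j hi hj
  by_contra hij
  set vi : N → ℝ := ⇑(hA.eigenvectorBasis i) with hvi
  set vj : N → ℝ := ⇑(hA.eigenvectorBasis j) with hvj
  have hAvi : A *ᵥ vi = hA.eigenvalues i • vi := hA.mulVec_eigenvectorBasis i
  have hAvj : A *ᵥ vj = hA.eigenvalues j • vj := hA.mulVec_eigenvectorBasis j
  have horth := hA.eigenvectorBasis.orthonormal
  rw [orthonormal_iff_ite] at horth
  have hii : ∑ k, vi k * vi k = 1 := by
    have h1 : (inner ℝ (hA.eigenvectorBasis i) (hA.eigenvectorBasis i) : ℝ) = 1 := by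
      simpa using horth i i
    rw [← h1]
    simp only [PiLp.inner_apply, RCLike.inner_apply, conj_trivial, hvi, mul_comm]
  have hjj : ∑ k, vj k * vj k = 1 := by
    have h1 : (inner ℝ (hA.eigenvectorBasis j) (hA.eigenvectorBasis j) : ℝ) = 1 := by
      simpa using horth j j
    rw [← h1]
    simp only [PiLp.inner_apply, RCLike.inner_apply, conj_trivial, hvj, mul_comm]
  have hij0 : ∑ k, vi k * vj k = 0 := by
    have := horth i j
    rw [if_neg hij] at this
    rw [← this]
    simp [PiLp.inner_apply, RCLike.inner_apply, hvi, hvj, mul_comm]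
  set p := ∑ k, vi k with hp
  set qq := ∑ k, vj k with hqq
  obtain ⟨a, b, hab, habpq⟩ : ∃ a b : ℝ, ¬(a = 0 ∧ b = 0) ∧ a * p + b * qq = 0 := by
    by_cases hq0 : qq = 0
    · exact ⟨0, 1, by simp, by simp [hq0]⟩
    · exact ⟨qq, -p, fun h => hq0 h.1, by ring⟩
  set x : N → ℝ := fun k => a * vi k + b * vj k with hx
  have hsum : ∑ k, x k = 0 := by
    simp only [hx, Finset.sum_add_distrib, ← Finset.mul_sum, ← hp, ← hqq]
    exact habpq
  have hAx : A *ᵥ x = fun k => a * (hA.eigenvalues i * vi k) + b * (hA.eigenvalues j * vj k) := by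
    have hx2 : x = a • vi + b • vj := by funext k; simp [hx]
    rw [hx2, mulVec_add, mulVec_smul, mulVec_smul, hAvi, hAvj]
    funext k
    simp [smul_eq_mul]
  have hqx : x ⬝ᵥ (A *ᵥ x) = a^2 * hA.eigenvalues i + b^2 * hA.eigenvalues j := by
    rw [hAx]
    simp only [dotProduct, hx]
    have expand : ∀ k, (a * vi k + b * vj k) *
        (a * (hA.eigenvalues i * vi k) + b * (hA.eigenvalues j * vj k)) =
        (a^2 * hA.eigenvalues i) * (vi k * vi k) + (b^2 * hA.eigenvalues j) * (vj k * vj k)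
        + (a*b*hA.eigenvalues i + a*b*hA.eigenvalues j) * (vi k * vj k) := by
      intro k; ring
    rw [Finset.sum_congr rfl (fun k _ => expand k), Finset.sum_add_distrib,
      Finset.sum_add_distrib, ← Finset.mul_sum, ← Finset.mul_sum, ← Finset.mul_sum,
      hii, hjj, hij0]
    ring
  have hxx : ∑ k, (x k)^2 = a^2 + b^2 := by
    simp only [hx]
    have expand : ∀ k, (a * vi k + b * vj k)^2 =
        a^2 * (vi k * vi k) + b^2 * (vj k * vj k) + (2*a*b) * (vi k * vj k) := by
      intro k; ring
    rw [Finset.sum_congr rfl (fun k _ => expand k), Finset.sum_add_distrib,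
      Finset.sum_add_distrib, ← Finset.mul_sum, ← Finset.mul_sum, ← Finset.mul_sum,
      hii, hjj, hij0]
    ring
  have hineq := hq x hsum
  rw [hqx, hxx] at hineq
  by_cases ha : a = 0
  · have hb : b ≠ 0 := fun hb => hab ⟨ha, hb⟩
    have hb2 : 0 < b^2 := by positivity
    rw [ha] at hineq
    nlinarith [mul_pos hb2 (sub_pos.mpr hj)]
  · have ha2 : 0 < a^2 := by positivity
    nlinarith [mul_pos ha2 (sub_pos.mpr hi), mul_nonneg (sq_nonneg b) (sub_pos.mpr hj).le]

lemma eig_exists_neg (A : Matrix N N ℝ) (hA : A.IsHermitian)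
    (hqw : (fun _ => (1:ℝ)) ⬝ᵥ (A *ᵥ fun _ => (1:ℝ)) < 0) :
    ∃ i, hA.eigenvalues i < 0 := by
  by_contra h
  push_neg at h
  have hps := hA.posSemidef_iff_eigenvalues_nonneg.mpr (Pi.le_def.mpr h)
  have := hps.dotProduct_mulVec_nonneg (fun _ => (1:ℝ))
  simp only [star_trivial] at this
  rw [RCLike.nonneg_iff] at this
  · exact absurd hqw (not_lt.mpr this.1)

end Eig

/-- Seidel energy: sum of absolute values of the eigenvalues (roots of the
characteristic polynomial, with multiplicity). -/
noncomputable def seidelEnergy {k : Type*} [Fintype k] [DecidableEq k]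
    (M : Matrix k k ℝ) : ℝ :=
  (M.charpoly.roots.map (fun x => |x|)).sum

theorem stmt9 (m n : ℕ) (hm : 3 ≤ m) (hn : 3 ≤ n) :
    ((seidelII m n).charpoly.roots.filter (fun x => x < 0)).card = 1 ∧
    ((seidelII m n).charpoly.roots.filter (fun x => 0 < x)).card = m + n - 1 := by
  have hA : (seidelII m n).IsHermitian := SeidelAux.seidelII_herm m n
  have hneg : ∃ i, hA.eigenvalues i < 0 := eig_exists_neg _ hA (SeidelAux.qf_one m n hm hn)
  have hone : ∀ i j, hA.eigenvalues i < 1 → hA.eigenvalues j < 1 → i = j :=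
    eig_at_most_one _ hA (fun x hx => SeidelAux.qf_lower m n hm hn x hx)
  obtain ⟨i₀, hi₀⟩ := hneg
  rw [roots_charpoly_hermitian _ hA]
  constructor
  · exact eig_key hA.eigenvalues (fun x => x < 0) i₀ hi₀ (fun x hx => hx.trans one_pos) hone
  · have h1 : ((Finset.univ.val.map hA.eigenvalues).filter (fun x => ¬ 0 < x)).card = 1 :=
      eig_key hA.eigenvalues (fun x => ¬ 0 < x) i₀ (not_lt.mpr hi₀.le)
        (fun x hx => lt_of_le_of_lt (not_lt.mp hx) one_pos) hone
    have h2 := Multiset.filter_add_not (fun x => 0 < x) (Finset.univ.val.map hA.eigenvalues)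
    have h3 := congrArg Multiset.card h2
    rw [Multiset.card_add] at h3
    have h4 : (Finset.univ.val.map hA.eigenvalues).card = m + n := by simp
    rw [h1, h4] at h3
    omega
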